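/- Let R = ℂ[E₁,E₂] with the derivations e, f, h as above and δ = 4E₂ − E₁². Then for every integer j ≥ 1, the family (f^r(δʲ))_{r ∈ ℕ} is linearly independent over ℂ. (Together with e(δʲ) = 0 and h(δʲ) = −4j·δʲ, this says that δʲ generates a copy of the Verma module of highest weight −4j inside R.) -/
import Mathlib


open MvPolynomial

/-- If `D p = c • p` then `D (p^n) = (n*c) • p^n`. -/
lemma deriv_pow_eigen {D : Derivation ℂ (MvPolynomial (Fin 2) ℂ) (MvPolynomial (Fin 2) ℂ)}
    {p : MvPolynomial (Fin 2) ℂ} {c : ℂ} (hp : D p = c • p) (n : ℕ) :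
    D (p ^ n) = ((n : ℂ) * c) • p ^ n := by
  induction n with
  | zero => simp
  | succ n ih =>
    rw [pow_succ, Derivation.leibniz, hp, ih, smul_comm, smul_eq_mul, smul_comm, smul_eq_mul,
      ← pow_succ, ← pow_succ']
    rw [← add_smul]
    congr 1
    push_cast
    ring

/-- In `R = ℂ[E₁,E₂]` with the derivations `e, f, h` determined by
`e(E₁) = -2`, `e(E₂) = -E₁`; `f(E₁) = E₁² - 2E₂`, `f(E₂) = E₁E₂`;
`h(E₁) = -2E₁`, `h(E₂) = -4E₂`, and `δ = 4E₂ - E₁²`, for every `j ≥ 1` the family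
`(f^r(δʲ))_{r ∈ ℕ}` is linearly independent over `ℂ` (so `δʲ` generates a Verma
module of highest weight `-4j`). Here `E₁ = X 0`, `E₂ = X 1`. -/
theorem f_iterates_on_delta_power_linearIndependent
    (e f h : Derivation ℂ (MvPolynomial (Fin 2) ℂ) (MvPolynomial (Fin 2) ℂ))
    (he1 : e (X 0) = -2) (he2 : e (X 1) = -X 0)
    (hf1 : f (X 0) = X 0 ^ 2 - 2 * X 1) (hf2 : f (X 1) = X 0 * X 1)
    (hh1 : h (X 0) = -2 * X 0) (hh2 : h (X 1) = -4 * X 1)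
    (δ : MvPolynomial (Fin 2) ℂ) (hδ : δ = 4 * X 1 - X 0 ^ 2)
    (j : ℕ) (hj : 1 ≤ j) :
    LinearIndependent ℂ (fun r : ℕ => (f.toLinearMap ^ r) (δ ^ j)) := by
  have h4e : e (4 : MvPolynomial (Fin 2) ℂ) = 0 := by have := e.map_natCast 4; simpa using this
  have h4f : f (4 : MvPolynomial (Fin 2) ℂ) = 0 := by have := f.map_natCast 4; simpa using this
  have h4h : h (4 : MvPolynomial (Fin 2) ℂ) = 0 := by have := h.map_natCast 4; simpa using this
  have h2e : e (2 : MvPolynomial (Fin 2) ℂ) = 0 := by have := e.map_natCast 2; simpa using this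
  have h2f : f (2 : MvPolynomial (Fin 2) ℂ) = 0 := by have := f.map_natCast 2; simpa using this
  have h2h : h (2 : MvPolynomial (Fin 2) ℂ) = 0 := by have := h.map_natCast 2; simpa using this
  -- δ is an eigenvector of h with eigenvalue -4, and is killed by e
  have hδh : h δ = (-4 : ℂ) • δ := by
    rw [hδ]
    simp only [map_sub, Derivation.leibniz, Derivation.leibniz_pow, hh1, hh2, h4h,
      MvPolynomial.smul_eq_C_mul, map_neg, map_ofNat, mul_zero, zero_add, pow_one,
      nsmul_eq_mul, smul_eq_mul]
    push_cast
    ring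
  have hδe : e δ = (0 : ℂ) • δ := by
    rw [hδ]
    simp only [map_sub, Derivation.leibniz, Derivation.leibniz_pow, he1, he2, h4e,
      MvPolynomial.smul_eq_C_mul, map_neg, map_ofNat, mul_zero, zero_add, pow_one,
      nsmul_eq_mul, smul_eq_mul, map_zero]
    push_cast
    ring
  -- commutator relations [h,f] = -2f and [e,f] = h
  have hhf : ∀ p, h (f p) = f (h p) - (2 : ℂ) • f p := by
    have : (⁅h, f⁆ : Derivation ℂ (MvPolynomial (Fin 2) ℂ) (MvPolynomial (Fin 2) ℂ))
        = (-2 : ℂ) • f := by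
      refine MvPolynomial.derivation_ext (Fin.forall_fin_two.mpr ⟨?_, ?_⟩) <;>
      · rw [Derivation.commutator_apply]
        simp only [Derivation.smul_apply]
        simp only [hf1, hf2, hh1, hh2, map_sub, map_mul, Derivation.leibniz,
          Derivation.leibniz_pow, h2f, h2h, h4f, h4h, hf1, hf2, hh1, hh2,
          MvPolynomial.smul_eq_C_mul, map_neg, map_ofNat, mul_zero, zero_add, pow_one,
          nsmul_eq_mul, smul_eq_mul, map_zero]
        push_cast
        ring
    intro p
    have h2 := congrArg (fun D : Derivation ℂ (MvPolynomial (Fin 2) ℂ) (MvPolynomial (Fin 2) ℂ)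
      => D p) this
    simp only [Derivation.commutator_apply, Derivation.smul_apply] at h2
    rw [sub_eq_iff_eq_add] at h2
    rw [h2, neg_smul]
    abel
  have hef : ∀ p, e (f p) = f (e p) + h p := by
    have : (⁅e, f⁆ : Derivation ℂ (MvPolynomial (Fin 2) ℂ) (MvPolynomial (Fin 2) ℂ)) = h := by
      refine MvPolynomial.derivation_ext (Fin.forall_fin_two.mpr ⟨?_, ?_⟩) <;>
      · rw [Derivation.commutator_apply]
        simp only [hf1, hf2, he1, he2, hh1, hh2, map_sub, map_mul, Derivation.leibniz,
          Derivation.leibniz_pow, h2e, h2f, h4e, h4f, hf1, hf2, he1, he2,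
          MvPolynomial.smul_eq_C_mul, map_neg, map_ofNat, mul_zero, zero_add, pow_one,
          nsmul_eq_mul, smul_eq_mul, map_zero]
        push_cast
        ring
    intro p
    have h2 := congrArg (fun D : Derivation ℂ (MvPolynomial (Fin 2) ℂ) (MvPolynomial (Fin 2) ℂ)
      => D p) this
    simp only [Derivation.commutator_apply] at h2
    rw [sub_eq_iff_eq_add] at h2
    rw [h2, add_comm]
  -- the vectors
  set v : ℕ → MvPolynomial (Fin 2) ℂ := fun r => (f.toLinearMap ^ r) (δ ^ j) with hv
  have hv0 : v 0 = δ ^ j := by simp [hv]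
  have hvs : ∀ r, v (r + 1) = f (v r) := by
    intro r
    simp only [hv, pow_succ', Module.End.mul_apply]
    rfl
  set μ : ℕ → ℂ := fun r => -(4 * j) - 2 * r with hμ
  -- h-eigenvector property
  have hvh : ∀ r, h (v r) = μ r • v r := by
    intro r
    induction r with
    | zero =>
      rw [hv0, deriv_pow_eigen hδh]
      congr 1
      simp only [hμ, Nat.cast_zero]
      ring
    | succ r ih =>
      rw [hvs, hhf, ih, Derivation.map_smul, ← hvs, ← sub_smul]
      congr 1
      simp only [hμ]
      push_cast
      ring
  -- e lowers
  have hve : ∀ r, e (v (r + 1)) = (((r : ℂ) + 1) * (-(4 * j) - r)) • v r := by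
    intro r
    induction r with
    | zero =>
      rw [hvs, hef, hvh, hv0, deriv_pow_eigen hδe]
      simp only [mul_zero, zero_smul, map_zero, zero_add, Nat.cast_zero, hμ]
      congr 1
      ring
    | succ r ih =>
      rw [hvs (r + 1), hef, ih, Derivation.map_smul, ← hvs, hvh (r + 1), ← add_smul]
      congr 1
      simp only [hμ]
      push_cast
      ring
  -- nonvanishing
  have hδ0 : δ ≠ 0 := by
    intro hc
    have := congrArg (MvPolynomial.eval ![0, 1]) hc
    rw [hδ] at this
    simp at this
  have hvne : ∀ r, v r ≠ 0 := by
    intro r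
    induction r with
    | zero => rw [hv0]; exact pow_ne_zero _ hδ0
    | succ r ih =>
      intro hc
      have h1 := hve r
      rw [hc, map_zero] at h1
      have h2 : (((r : ℂ) + 1) * (-(4 * j) - r)) ≠ 0 := by
        apply mul_ne_zero
        · exact Nat.cast_add_one_ne_zero r
        · have h3 : (-(4 * (j : ℂ)) - r) = -((4 * j + r : ℕ) : ℂ) := by push_cast; ring
          have h4jr : (4 * j + r : ℕ) ≠ 0 := by omega
          rw [h3, neg_ne_zero]
          exact Nat.cast_ne_zero.mpr h4jr
      exact ih (by simpa [h2] using h1.symm)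
  -- injectivity of eigenvalues
  have hinj : Function.Injective μ := by
    intro a b hab
    simp only [hμ] at hab
    have : (a : ℂ) = b := by linear_combination (-(1 : ℂ) / 2) * hab
    exact_mod_cast this
  exact Module.End.eigenvectors_linearIndependent' (h.toLinearMap : Module.End ℂ _) μ hinj v
    (fun r => ⟨Module.End.mem_eigenspace_iff.mpr (hvh r), hvne r⟩)
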